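/- Let N ≥ 1, κ > 0, γ₂ > 0, R₁ > 1 and c₀, C₀ > 0. Let u be a continuous positive function on ℝ^N ∖ {0} such that c₀|x|^{−γ₂} ≤ u(x) ≤ C₀|x|^{−γ₂} for all |x| > R₁, and such that inf{u(x) : 0 < |x| ≤ R₁} > 0. Then there exists a constant c̃ > 0, depending only on c₀, C₀, R₁, κ, inf_{0<|x|≤R₁} u and sup_{|x|>κ} u, such that for every λ ≤ −κ and every x ∈ Σ_λ with x_λ ≠ 0 one has u(x_λ) ≥ c̃ · u(x). -/

import Mathlib

open MeasureTheory

/-- Reflection of `x` across the hyperplane `T_λ = {x : x₁ = λ}`. -/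
def reflect (N : ℕ) (hN : 0 < N) (lam : ℝ) (x : EuclideanSpace ℝ (Fin N)) :
    EuclideanSpace ℝ (Fin N) :=
  WithLp.toLp 2 (fun i => if i = (⟨0, hN⟩ : Fin N) then 2 * lam - x i else x i)

/-- The half-space `Σ_λ = {x : x₁ < λ}`. -/
def halfSpace (N : ℕ) (hN : 0 < N) (lam : ℝ) : Set (EuclideanSpace ℝ (Fin N)) :=
  {x | x ⟨0, hN⟩ < lam}

lemma abs_coord_le {N : ℕ} (x : EuclideanSpace ℝ (Fin N)) (i : Fin N) : |x i| ≤ ‖x‖ := by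
  rw [EuclideanSpace.norm_eq]
  have h1 : ‖x i‖ ^ 2 ≤ ∑ j, ‖x j‖ ^ 2 :=
    Finset.single_le_sum (f := fun j => ‖x j‖ ^ 2) (fun j _ => sq_nonneg _) (Finset.mem_univ i)
  calc |x i| = Real.sqrt (‖x i‖ ^ 2) := by
        rw [Real.sqrt_sq_eq_abs, Real.norm_eq_abs, abs_abs]
    _ ≤ _ := Real.sqrt_le_sqrt h1

lemma norm_reflect_le {N : ℕ} (hN : 0 < N) (lam : ℝ) (x : EuclideanSpace ℝ (Fin N))
    (hx0 : x ⟨0, hN⟩ < lam) (hlam : lam ≤ 0) : ‖reflect N hN lam x‖ ≤ ‖x‖ := by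
  rw [EuclideanSpace.norm_eq, EuclideanSpace.norm_eq]
  apply Real.sqrt_le_sqrt
  apply Finset.sum_le_sum
  intro i _
  by_cases h : i = ⟨0, hN⟩
  · subst h
    simp only [reflect, PiLp.toLp_apply, if_pos rfl, if_true, Real.norm_eq_abs, sq_abs]
    nlinarith [mul_nonneg (neg_nonneg.mpr hlam) (le_of_lt (sub_pos.mpr hx0))]
  · simp [reflect, h]

theorem stmt_7 (N : ℕ) (hN : 0 < N) (κ γ₂ R₁ c₀ C₀ : ℝ)
    (hκ : 0 < κ) (hγ₂ : 0 < γ₂) (hR₁ : 1 < R₁) (hc₀ : 0 < c₀) (hC₀ : 0 < C₀)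
    (u : EuclideanSpace ℝ (Fin N) → ℝ)
    (hcont : ContinuousOn u {x : EuclideanSpace ℝ (Fin N) | x ≠ 0})
    (hpos : ∀ x : EuclideanSpace ℝ (Fin N), x ≠ 0 → 0 < u x)
    (hbd : ∀ x : EuclideanSpace ℝ (Fin N), R₁ < ‖x‖ →
      c₀ * ‖x‖ ^ (-γ₂) ≤ u x ∧ u x ≤ C₀ * ‖x‖ ^ (-γ₂))
    (hinf : 0 < sInf (u '' {x : EuclideanSpace ℝ (Fin N) | 0 < ‖x‖ ∧ ‖x‖ ≤ R₁})) :
    ∃ ctil : ℝ, 0 < ctil ∧ ∀ lam : ℝ, lam ≤ -κ →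
      ∀ x ∈ halfSpace N hN lam, reflect N hN lam x ≠ 0 →
        ctil * u x ≤ u (reflect N hN lam x) := by
  classical
  have hR₁pos : (0:ℝ) < R₁ := by linarith
  -- compact region where we bound u from above
  set A : Set (EuclideanSpace ℝ (Fin N)) :=
    Metric.closedBall (0 : EuclideanSpace ℝ (Fin N)) R₁ ∩ {x | κ ≤ ‖x‖} with hA
  have hAcomp : IsCompact A :=
    (isCompact_closedBall _ _).inter_right (isClosed_le continuous_const continuous_norm)
  have hAcont : ContinuousOn u A := by
    apply hcont.mono
    intro x hx
    have h2 : κ ≤ ‖x‖ := hx.2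
    simp only [Set.mem_setOf_eq]
    intro h
    rw [h, norm_zero] at h2
    linarith
  obtain ⟨C, hC⟩ := hAcomp.exists_bound_of_continuousOn hAcont
  set M := max C (C₀ * R₁ ^ (-γ₂)) with hM
  have hMpos : 0 < M := lt_of_lt_of_le (by positivity) (le_max_right _ _)
  set m := sInf (u '' {x : EuclideanSpace ℝ (Fin N) | 0 < ‖x‖ ∧ ‖x‖ ≤ R₁}) with hm
  refine ⟨min (m / M) (c₀ / C₀), lt_min (div_pos hinf hMpos) (div_pos hc₀ hC₀), ?_⟩
  intro lam hlam x hx hne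
  have hx0 : x ⟨0, hN⟩ < lam := hx
  have hlam0 : lam < 0 := lt_of_le_of_lt hlam (by linarith)
  have hxnorm : κ < ‖x‖ := by
    have h1 := abs_coord_le x ⟨0, hN⟩
    have h2 : κ < |x ⟨0, hN⟩| := by
      rw [abs_of_neg (by linarith : x ⟨0, hN⟩ < 0)]
      linarith
    linarith
  have hxne : x ≠ 0 := by
    intro h
    rw [h, norm_zero] at hxnorm
    linarith
  have hrefl_le : ‖reflect N hN lam x‖ ≤ ‖x‖ := norm_reflect_le hN lam x hx0 hlam0.le
  have hux : 0 < u x := hpos x hxne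
  set y := reflect N hN lam x with hy
  by_cases hyR : ‖y‖ ≤ R₁
  · -- reflected point in the ball: use infimum
    have hym : m ≤ u y := by
      apply csInf_le
      · refine ⟨0, ?_⟩
        rintro v ⟨z, hz, rfl⟩
        refine (hpos z ?_).le
        intro h
        simp only [Set.mem_setOf_eq, h, norm_zero] at hz
        exact lt_irrefl 0 hz.1
      · exact ⟨y, ⟨norm_pos_iff.mpr hne, hyR⟩, rfl⟩
    have huxM : u x ≤ M := by
      by_cases hxR : ‖x‖ ≤ R₁
      · have hmem : x ∈ A := by
          constructor
          · simpa [Metric.mem_closedBall, dist_zero_right] using hxR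
          · exact hxnorm.le
        have := hC x hmem
        calc u x ≤ |u x| := le_abs_self _
          _ = ‖u x‖ := (Real.norm_eq_abs _).symm
          _ ≤ C := this
          _ ≤ M := le_max_left _ _
      · push_neg at hxR
        have h2 := (hbd x hxR).2
        have h3 : C₀ * ‖x‖ ^ (-γ₂) ≤ C₀ * R₁ ^ (-γ₂) := by
          apply mul_le_mul_of_nonneg_left _ hC₀.le
          exact Real.rpow_le_rpow_of_nonpos hR₁pos hxR.le (by linarith)
        have h4 : C₀ * R₁ ^ (-γ₂) ≤ M := le_max_right _ _
        linarith
    calc min (m / M) (c₀ / C₀) * u x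
        ≤ (m / M) * u x := mul_le_mul_of_nonneg_right (min_le_left _ _) hux.le
      _ ≤ (m / M) * M := mul_le_mul_of_nonneg_left huxM (div_pos hinf hMpos).le
      _ = m := by field_simp
      _ ≤ u y := hym
  · push_neg at hyR
    have hxR : R₁ < ‖x‖ := lt_of_lt_of_le hyR hrefl_le
    have h1 := (hbd y hyR).1
    have h2 := (hbd x hxR).2
    have h3 : c₀ * ‖x‖ ^ (-γ₂) ≤ c₀ * ‖y‖ ^ (-γ₂) := by
      apply mul_le_mul_of_nonneg_left _ hc₀.le
      exact Real.rpow_le_rpow_of_nonpos (by linarith : (0:ℝ) < ‖y‖) hrefl_le (by linarith)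
    have h5 : (c₀ / C₀) * u x ≤ (c₀ / C₀) * (C₀ * ‖x‖ ^ (-γ₂)) :=
      mul_le_mul_of_nonneg_left h2 (div_pos hc₀ hC₀).le
    have h6 : (c₀ / C₀) * (C₀ * ‖x‖ ^ (-γ₂)) = c₀ * ‖x‖ ^ (-γ₂) := by
      field_simp
    have h4 : min (m / M) (c₀ / C₀) * u x ≤ (c₀ / C₀) * u x :=
      mul_le_mul_of_nonneg_right (min_le_right _ _) hux.le
    linarith
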